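/- Let T¹(u), T²(u), U₁(u), U₂(u) be families of elements of an associative algebra (polynomials in u) satisfying: (i) (u−v−η)·Tᵃ(u)Tᵇ(v) = (u−v)·Tᵇ(v)Tᵃ(u) − η·Tᵃ(v)Tᵇ(u) for a,b ∈ {1,2}; (ii) (u−v+η)·Uₐ(u)U_b(v) = (u−v)·U_b(v)Uₐ(u) + η·Uₐ(v)U_b(u) for a,b ∈ {1,2}; (iii) [Tᵃ(u), U_b(v)] = 0 for all a,b ∈ {1,2} and all u,v. Define B_c(u) := T²(u)U₁(u−c) − T¹(u)U₂(u−c) for a fixed scalar c. Then [B_c(u), B_c(v)] = 0 for all u, v. -/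

import Mathlib

open Polynomial

/-- Embed `p(·) ∈ A[X]` as a polynomial in the variable `u` inside `A[v][u]`. -/
noncomputable def inU {A : Type*} [Ring A] (p : A[X]) : Polynomial (A[X]) :=
  p.map Polynomial.C

/-- Embed `p(·) ∈ A[X]` as a polynomial in the variable `v` inside `A[v][u]`. -/
noncomputable def inV {A : Type*} [Ring A] (p : A[X]) : Polynomial (A[X]) :=
  Polynomial.C p

/-- The shifted polynomial `u ↦ p(u - c)`. -/
noncomputable def shiftDown {A : Type*} [Ring A] (c : A) (p : A[X]) : A[X] :=
  p.comp (Polynomial.X - Polynomial.C c)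

section PolyHelpers
variable {A : Type*} [Ring A]

lemma commute_C_iff (x : A) (q : A[X]) :
    Commute (Polynomial.C x) q ↔ ∀ j, Commute x (q.coeff j) := by
  constructor
  · intro hcomm j
    have := congrArg (fun r => Polynomial.coeff r j) hcomm.eq
    show x * q.coeff j = q.coeff j * x
    simpa [Polynomial.coeff_C_mul, Polynomial.coeff_mul_C] using this
  · intro hc
    show Polynomial.C x * q = q * Polynomial.C x
    ext j
    rw [Polynomial.coeff_C_mul, Polynomial.coeff_mul_C]
    exact (hc j).eq

lemma inU_mul_inV_comm_iff (p q : A[X]) :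
    inU p * inV q = inV q * inU p ↔ ∀ i j, Commute (p.coeff i) (q.coeff j) := by
  have key : ∀ i, (inU p * inV q).coeff i = Polynomial.C (p.coeff i) * q ∧
      (inV q * inU p).coeff i = q * Polynomial.C (p.coeff i) := by
    intro i
    constructor
    · rw [inU, inV, Polynomial.coeff_mul_C, Polynomial.coeff_map]
    · rw [inU, inV, Polynomial.coeff_C_mul, Polynomial.coeff_map]
  constructor
  · intro hcomm i j
    have hi := congrArg (fun r => Polynomial.coeff r i) hcomm
    rw [(key i).1, (key i).2] at hi
    exact (commute_C_iff _ _).mp hi j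
  · intro hc
    ext i : 1
    rw [(key i).1, (key i).2]
    exact ((commute_C_iff _ _).mpr (hc i)).eq

lemma commute_C_comp (x : A) (q s : A[X])
    (hq : ∀ j, Commute x (q.coeff j)) (hs : Commute (Polynomial.C x) s) :
    Commute (Polynomial.C x) (q.comp s) := by
  rw [Polynomial.comp, Polynomial.eval₂_eq_sum, Polynomial.sum_def]
  exact Commute.sum_right _ _ _ fun n _ => ((hq n).map Polynomial.C).mul_right (hs.pow_right n)

lemma commute_shiftDown_coeff (x c' : A) (q : A[X])
    (hq : ∀ j, Commute x (q.coeff j)) (hc : Commute x c') :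
    ∀ j, Commute x ((shiftDown c' q).coeff j) := by
  apply (commute_C_iff x _).mp
  exact commute_C_comp x q _ hq ((Polynomial.commute_X _).symm.sub_right (hc.map Polynomial.C))

end PolyHelpers

section ShiftHom
variable {A : Type*} [Ring A]

lemma commute_C_central {c' : A} (hc : ∀ a : A, Commute a c') (q : A[X]) :
    Commute q (Polynomial.C c') :=
  ((commute_C_iff c' q).mpr fun j => (hc (q.coeff j)).symm).symm

noncomputable def shiftRingHom (c' : A) (hc : ∀ a : A, Commute a c') : A[X] →+* A[X] :=
  Polynomial.eval₂RingHom' Polynomial.C (Polynomial.X - Polynomial.C c')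
    (fun a => (Polynomial.commute_X _).symm.sub_right ((hc a).map Polynomial.C))

lemma shiftRingHom_apply (c' : A) (hc : ∀ a : A, Commute a c') (p : A[X]) :
    shiftRingHom c' hc p = shiftDown c' p := rfl

noncomputable def phiHom (c' : A) (hc : ∀ a : A, Commute a c') :
    Polynomial (A[X]) →+* Polynomial (A[X]) :=
  (Polynomial.eval₂RingHom' Polynomial.C
      (Polynomial.X - Polynomial.C (Polynomial.C c'))
      (fun q => (Polynomial.commute_X _).symm.sub_right
        ((commute_C_central hc q).symm.map Polynomial.C).symm)).comp
    (Polynomial.mapRingHom (shiftRingHom c' hc))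

variable (c' : A) (hc : ∀ a : A, Commute a c')

lemma phi_inV (q : A[X]) : phiHom c' hc (inV q) = inV (shiftDown c' q) := by
  simp only [phiHom, inV, RingHom.comp_apply, Polynomial.coe_mapRingHom, Polynomial.map_C,
    Polynomial.eval₂RingHom'_apply, Polynomial.eval₂_C, shiftRingHom_apply]

lemma phi_X : phiHom c' hc Polynomial.X
    = Polynomial.X - Polynomial.C (Polynomial.C c') := by
  simp only [phiHom, RingHom.comp_apply, Polynomial.coe_mapRingHom, Polynomial.map_X,
    Polynomial.eval₂RingHom'_apply, Polynomial.eval₂_X]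

lemma phi_inU (p : A[X]) : phiHom c' hc (inU p) = inU (shiftDown c' p) := by
  have hhom : (phiHom c' hc).comp (Polynomial.mapRingHom (Polynomial.C : A →+* A[X]))
      = (Polynomial.mapRingHom (Polynomial.C : A →+* A[X])).comp (shiftRingHom c' hc) := by
    apply Polynomial.ringHom_ext
    · intro a
      show phiHom c' hc ((Polynomial.C a).map Polynomial.C)
          = ((shiftRingHom c' hc) (Polynomial.C a)).map Polynomial.C
      rw [Polynomial.map_C, ← inV, phi_inV]
      simp only [shiftRingHom_apply, shiftDown, Polynomial.C_comp, Polynomial.map_C, inV]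
    · show phiHom c' hc ((Polynomial.X : A[X]).map Polynomial.C)
          = ((shiftRingHom c' hc) Polynomial.X).map Polynomial.C
      rw [Polynomial.map_X, phi_X]
      simp only [shiftRingHom_apply, shiftDown, Polynomial.X_comp, Polynomial.map_sub,
        Polynomial.map_X, Polynomial.map_C]
  have h2 := RingHom.congr_fun hhom p
  simpa only [RingHom.comp_apply, Polynomial.coe_mapRingHom, inU, shiftRingHom_apply] using h2
end ShiftHom

section Core
variable {S : Type*} [Ring S]

lemma regroup_mid {b c : S} (a d : S) (hbc : b * c = c * b) :
    (a * b) * (c * d) = (a * c) * (b * d) := by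
  rw [mul_assoc, ← mul_assoc b, hbc, mul_assoc, ← mul_assoc]

lemma split_prod {x h T W A B : S} (hx : ∀ s : S, Commute x s) (hh : ∀ s : S, Commute h s)
    (e1 : (x + h) * T = A) (e2 : (x - h) * W = B) :
    (x + h) * ((x - h) * (T * W)) = A * B := by
  have hcomm : (x - h) * T = T * (x - h) := ((hx T).sub_left (hh T)).eq
  calc (x + h) * ((x - h) * (T * W)) = (x + h) * (((x - h) * T) * W) := by rw [mul_assoc]
    _ = (x + h) * ((T * (x - h)) * W) := by rw [hcomm]
    _ = ((x + h) * T) * ((x - h) * W) := by rw [mul_assoc T, ← mul_assoc]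
    _ = A * B := by rw [e1, e2]

lemma expand4 {x h : S} (A B C D : S) (hx : ∀ s : S, Commute x s) (hh : ∀ s : S, Commute h s) :
    (x * A + h * B) * (x * C - h * D)
      = x * (x * (A * C)) - x * (h * (A * D)) + x * (h * (B * C)) - h * (h * (B * D)) := by
  have px : ∀ a b : S, a * (x * b) = x * (a * b) := fun a b => by
    rw [← mul_assoc, ← (hx a).eq, mul_assoc]
  have ph : ∀ a b : S, a * (h * b) = h * (a * b) := fun a b => by
    rw [← mul_assoc, ← (hh a).eq, mul_assoc]
  calc (x * A + h * B) * (x * C - h * D)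
      = x * (A * (x * C)) - x * (A * (h * D)) + (h * (B * (x * C)) - h * (B * (h * D))) := by
        noncomm_ring
    _ = x * (x * (A * C)) - x * (h * (A * D)) + (h * (x * (B * C)) - h * (h * (B * D))) := by
        rw [px A C, ph A D, px B C, ph B D]
    _ = x * (x * (A * C)) - x * (h * (A * D)) + x * (h * (B * C)) - h * (h * (B * D)) := by
        rw [px h (B * C)]; abel

lemma expand2 {x h : S} (w : S) (hx : ∀ s : S, Commute x s) (hh : ∀ s : S, Commute h s) :
    (x + h) * ((x - h) * w) = x * (x * w) - h * (h * w) := by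
  have px : ∀ a b : S, a * (x * b) = x * (a * b) := fun a b => by
    rw [← mul_assoc, ← (hx a).eq, mul_assoc]
  calc (x + h) * ((x - h) * w) = x * (x * w) - x * (h * w) + (h * (x * w) - h * (h * w)) := by
        noncomm_ring
    _ = x * (x * w) - x * (h * w) + (x * (h * w) - h * (h * w)) := by rw [px h w]
    _ = x * (x * w) - h * (h * w) := by abel

lemma core_comm {x h : S} (t t' w w' : Fin 2 → S)
    (hx : ∀ s : S, Commute x s) (hh : ∀ s : S, Commute h s)
    (hreg1 : IsLeftRegular (x - h)) (hreg2 : IsLeftRegular (x + h))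
    (HT : ∀ a b : Fin 2, (x - h) * (t a * t' b) = x * (t' b * t a) - h * (t' a * t b))
    (HW : ∀ a b : Fin 2, (x + h) * (w a * w' b) = x * (w' b * w a) + h * (w' a * w b))
    (HTW : ∀ a b : Fin 2, t a * w' b = w' b * t a)
    (HWT : ∀ a b : Fin 2, w a * t' b = t' b * w a) :
    (t 1 * w 0 - t 0 * w 1) * (t' 1 * w' 0 - t' 0 * w' 1)
      = (t' 1 * w' 0 - t' 0 * w' 1) * (t 1 * w 0 - t 0 * w 1) := by
  have L1T : ∀ a b : Fin 2, t a * t' b + t b * t' a = t' b * t a + t' a * t b := by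
    intro a b
    apply hreg1
    show (x - h) * _ = (x - h) * _
    calc (x - h) * (t a * t' b + t b * t' a)
        = (x - h) * (t a * t' b) + (x - h) * (t b * t' a) := by rw [mul_add]
      _ = (x * (t' b * t a) - h * (t' a * t b)) + (x * (t' a * t b) - h * (t' b * t a)) := by
          rw [HT a b, HT b a]
      _ = (x - h) * (t' b * t a + t' a * t b) := by noncomm_ring
  have L1W : ∀ a b : Fin 2, w a * w' b + w b * w' a = w' b * w a + w' a * w b := by
    intro a b
    apply hreg2
    show (x + h) * _ = (x + h) * _
    calc (x + h) * (w a * w' b + w b * w' a)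
        = (x + h) * (w a * w' b) + (x + h) * (w b * w' a) := by rw [mul_add]
      _ = (x * (w' b * w a) + h * (w' a * w b)) + (x * (w' a * w b) + h * (w' b * w a)) := by
          rw [HW a b, HW b a]
      _ = (x + h) * (w' b * w a + w' a * w b) := by noncomm_ring
  have HT' : ∀ a b : Fin 2, (x + h) * (t' a * t b) = x * (t b * t' a) + h * (t a * t' b) := by
    intro a b
    have key : (x + h) * (t' a * t b) - (x * (t b * t' a) + h * (t a * t' b))
        = -((x - h) * (t b * t' a) - (x * (t' a * t b) - h * (t' b * t a)))
          - h * ((t a * t' b + t b * t' a) - (t' b * t a + t' a * t b)) := by noncomm_ring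
    have z1 : (x - h) * (t b * t' a) - (x * (t' a * t b) - h * (t' b * t a)) = 0 :=
      sub_eq_zero_of_eq (HT b a)
    have z2 : (t a * t' b + t b * t' a) - (t' b * t a + t' a * t b) = 0 :=
      sub_eq_zero_of_eq (L1T a b)
    rw [z1, z2] at key
    simp only [neg_zero, mul_zero, sub_zero] at key
    exact sub_eq_zero.mp key
  have HW' : ∀ a b : Fin 2, (x - h) * (w' a * w b) = x * (w b * w' a) - h * (w a * w' b) := by
    intro a b
    have key : (x - h) * (w' a * w b) - (x * (w b * w' a) - h * (w a * w' b))
        = -((x + h) * (w b * w' a) - (x * (w' a * w b) + h * (w' b * w a)))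
          + h * ((w a * w' b + w b * w' a) - (w' b * w a + w' a * w b)) := by noncomm_ring
    have z1 : (x + h) * (w b * w' a) - (x * (w' a * w b) + h * (w' b * w a)) = 0 :=
      sub_eq_zero_of_eq (HW b a)
    have z2 : (w a * w' b + w b * w' a) - (w' b * w a + w' a * w b) = 0 :=
      sub_eq_zero_of_eq (L1W a b)
    rw [z1, z2] at key
    simp only [neg_zero, mul_zero, add_zero, zero_add] at key
    exact sub_eq_zero.mp key
  have hP : (t 1 * w 0 - t 0 * w 1) * (t' 1 * w' 0 - t' 0 * w' 1)
      = (t 1 * t' 1) * (w 0 * w' 0) - (t 1 * t' 0) * (w 0 * w' 1)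
        - (t 0 * t' 1) * (w 1 * w' 0) + (t 0 * t' 0) * (w 1 * w' 1) := by
    calc (t 1 * w 0 - t 0 * w 1) * (t' 1 * w' 0 - t' 0 * w' 1)
        = (t 1 * w 0) * (t' 1 * w' 0) - (t 1 * w 0) * (t' 0 * w' 1)
          - ((t 0 * w 1) * (t' 1 * w' 0) - (t 0 * w 1) * (t' 0 * w' 1)) := by noncomm_ring
      _ = (t 1 * t' 1) * (w 0 * w' 0) - (t 1 * t' 0) * (w 0 * w' 1)
          - ((t 0 * t' 1) * (w 1 * w' 0) - (t 0 * t' 0) * (w 1 * w' 1)) := by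
          rw [regroup_mid _ _ (HWT 0 1), regroup_mid _ _ (HWT 0 0),
            regroup_mid _ _ (HWT 1 1), regroup_mid _ _ (HWT 1 0)]
      _ = _ := by noncomm_ring
  have hQ : (t' 1 * w' 0 - t' 0 * w' 1) * (t 1 * w 0 - t 0 * w 1)
      = (t' 1 * t 1) * (w' 0 * w 0) - (t' 1 * t 0) * (w' 0 * w 1)
        - (t' 0 * t 1) * (w' 1 * w 0) + (t' 0 * t 0) * (w' 1 * w 1) := by
    calc (t' 1 * w' 0 - t' 0 * w' 1) * (t 1 * w 0 - t 0 * w 1)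
        = (t' 1 * w' 0) * (t 1 * w 0) - (t' 1 * w' 0) * (t 0 * w 1)
          - ((t' 0 * w' 1) * (t 1 * w 0) - (t' 0 * w' 1) * (t 0 * w 1)) := by noncomm_ring
      _ = (t' 1 * t 1) * (w' 0 * w 0) - (t' 1 * t 0) * (w' 0 * w 1)
          - ((t' 0 * t 1) * (w' 1 * w 0) - (t' 0 * t 0) * (w' 1 * w 1)) := by
          rw [regroup_mid _ _ (HTW 1 0).symm, regroup_mid _ _ (HTW 0 0).symm,
            regroup_mid _ _ (HTW 1 1).symm, regroup_mid _ _ (HTW 0 1).symm]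
      _ = _ := by noncomm_ring
  rw [hP, hQ]
  have E : (x + h) * ((x - h) * ((t' 1 * t 1) * (w' 0 * w 0) - (t' 1 * t 0) * (w' 0 * w 1)
        - (t' 0 * t 1) * (w' 1 * w 0) + (t' 0 * t 0) * (w' 1 * w 1)))
      = (x + h) * ((x - h) * ((t 1 * t' 1) * (w 0 * w' 0) - (t 1 * t' 0) * (w 0 * w' 1)
        - (t 0 * t' 1) * (w 1 * w' 0) + (t 0 * t' 0) * (w 1 * w' 1))) := by
    have h1 : (x + h) * ((x - h) * ((t' 1 * t 1) * (w' 0 * w 0) - (t' 1 * t 0) * (w' 0 * w 1)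
          - (t' 0 * t 1) * (w' 1 * w 0) + (t' 0 * t 0) * (w' 1 * w 1)))
        = (x + h) * ((x - h) * ((t' 1 * t 1) * (w' 0 * w 0)))
          - (x + h) * ((x - h) * ((t' 1 * t 0) * (w' 0 * w 1)))
          - (x + h) * ((x - h) * ((t' 0 * t 1) * (w' 1 * w 0)))
          + (x + h) * ((x - h) * ((t' 0 * t 0) * (w' 1 * w 1))) := by noncomm_ring
    have h2 : (x + h) * ((x - h) * ((t 1 * t' 1) * (w 0 * w' 0) - (t 1 * t' 0) * (w 0 * w' 1)
          - (t 0 * t' 1) * (w 1 * w' 0) + (t 0 * t' 0) * (w 1 * w' 1)))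
        = (x + h) * ((x - h) * ((t 1 * t' 1) * (w 0 * w' 0)))
          - (x + h) * ((x - h) * ((t 1 * t' 0) * (w 0 * w' 1)))
          - (x + h) * ((x - h) * ((t 0 * t' 1) * (w 1 * w' 0)))
          + (x + h) * ((x - h) * ((t 0 * t' 0) * (w 1 * w' 1))) := by noncomm_ring
    rw [h1, h2,
      split_prod hx hh (HT' 1 1) (HW' 0 0), split_prod hx hh (HT' 1 0) (HW' 0 1),
      split_prod hx hh (HT' 0 1) (HW' 1 0), split_prod hx hh (HT' 0 0) (HW' 1 1),
      expand4 (t 1 * t' 1) (t 1 * t' 1) (w 0 * w' 0) (w 0 * w' 0) hx hh,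
      expand4 (t 0 * t' 1) (t 1 * t' 0) (w 1 * w' 0) (w 0 * w' 1) hx hh,
      expand4 (t 1 * t' 0) (t 0 * t' 1) (w 0 * w' 1) (w 1 * w' 0) hx hh,
      expand4 (t 0 * t' 0) (t 0 * t' 0) (w 1 * w' 1) (w 1 * w' 1) hx hh,
      expand2 ((t 1 * t' 1) * (w 0 * w' 0)) hx hh,
      expand2 ((t 1 * t' 0) * (w 0 * w' 1)) hx hh,
      expand2 ((t 0 * t' 1) * (w 1 * w' 0)) hx hh,
      expand2 ((t 0 * t' 0) * (w 1 * w' 1)) hx hh]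
    abel
  exact (hreg1 (hreg2 E)).symm

end Core


/-- For families `T¹, T², U₁, U₂` (written `T 0, T 1, U 0, U 1`) satisfying
(i) `(u−v−η)Tᵃ(u)Tᵇ(v) = (u−v)Tᵇ(v)Tᵃ(u) − ηTᵃ(v)Tᵇ(u)`,
(ii) `(u−v+η)Uₐ(u)U_b(v) = (u−v)U_b(v)Uₐ(u) + ηUₐ(v)U_b(u)`,
(iii) `[Tᵃ(u), U_b(v)] = 0`,
the polynomial `B_c(u) = T²(u)U₁(u−c) − T¹(u)U₂(u−c)` is a commuting family:
`[B_c(u), B_c(v)] = 0` as an identity of polynomials in `u, v`. -/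
theorem B_commuting_family
    {R : Type*} [CommRing R] {A : Type*} [Ring A] [Algebra R A]
    (η c : R) (T U : Fin 2 → A[X])
    (hTT : ∀ a b : Fin 2,
      (Polynomial.X - inV Polynomial.X - algebraMap R (Polynomial (A[X])) η)
          * (inU (T a) * inV (T b))
      = (Polynomial.X - inV Polynomial.X) * (inV (T b) * inU (T a))
        - algebraMap R (Polynomial (A[X])) η * (inV (T a) * inU (T b)))
    (hUU : ∀ a b : Fin 2,
      (Polynomial.X - inV Polynomial.X + algebraMap R (Polynomial (A[X])) η)
          * (inU (U a) * inV (U b))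
      = (Polynomial.X - inV Polynomial.X) * (inV (U b) * inU (U a))
        + algebraMap R (Polynomial (A[X])) η * (inV (U a) * inU (U b)))
    (hTU : ∀ a b : Fin 2, inU (T a) * inV (U b) = inV (U b) * inU (T a)) :
    inU (T 1 * shiftDown (algebraMap R A c) (U 0)
          - T 0 * shiftDown (algebraMap R A c) (U 1))
      * inV (T 1 * shiftDown (algebraMap R A c) (U 0)
          - T 0 * shiftDown (algebraMap R A c) (U 1))
    = inV (T 1 * shiftDown (algebraMap R A c) (U 0)
          - T 0 * shiftDown (algebraMap R A c) (U 1))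
      * inU (T 1 * shiftDown (algebraMap R A c) (U 0)
          - T 0 * shiftDown (algebraMap R A c) (U 1)) := by
  set c' : A := algebraMap R A c with hc'def
  have hc : ∀ a : A, Commute a c' := fun a => (Algebra.commutes c a).symm
  have hCX : ∀ s : Polynomial (A[X]), Commute (inV (Polynomial.X : A[X])) s := by
    intro s
    exact (commute_C_iff _ _).mpr fun j => Polynomial.commute_X _
  have hx : ∀ s : Polynomial (A[X]), Commute (Polynomial.X - inV (Polynomial.X : A[X])) s :=
    fun s => (Polynomial.commute_X s).sub_left (hCX s)
  have hh : ∀ s : Polynomial (A[X]), Commute (algebraMap R (Polynomial (A[X])) η) s :=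
    fun s => Algebra.commutes η s
  have halg : algebraMap R (Polynomial (A[X])) η
      = Polynomial.C (Polynomial.C (algebraMap R A η)) := by
    rw [Polynomial.algebraMap_apply, Polynomial.algebraMap_apply]
  have hreg1 : IsLeftRegular
      (Polynomial.X - inV (Polynomial.X : A[X]) - algebraMap R (Polynomial (A[X])) η) := by
    have e : Polynomial.X - inV (Polynomial.X : A[X]) - algebraMap R (Polynomial (A[X])) η
        = Polynomial.X - Polynomial.C (Polynomial.X + Polynomial.C (algebraMap R A η)) := by
      rw [halg, inV, map_add, sub_sub]
    rw [e]
    exact (Polynomial.monic_X_sub_C _).isRegular.left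
  have hreg2 : IsLeftRegular
      (Polynomial.X - inV (Polynomial.X : A[X]) + algebraMap R (Polynomial (A[X])) η) := by
    have e : Polynomial.X - inV (Polynomial.X : A[X]) + algebraMap R (Polynomial (A[X])) η
        = Polynomial.X - Polynomial.C (Polynomial.X - Polynomial.C (algebraMap R A η)) := by
      rw [halg, inV, map_sub, sub_add]
    rw [e]
    exact (Polynomial.monic_X_sub_C _).isRegular.left
  have e1 : phiHom c' hc (Polynomial.X - inV (Polynomial.X : A[X]))
      = Polynomial.X - inV (Polynomial.X : A[X]) := by
    rw [map_sub, phi_X, phi_inV]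
    simp only [shiftDown, Polynomial.X_comp, inV, map_sub]
    abel
  have e2 : phiHom c' hc (algebraMap R (Polynomial (A[X])) η)
      = algebraMap R (Polynomial (A[X])) η := by
    rw [halg, ← inV, phi_inV]
    simp only [shiftDown, Polynomial.C_comp, inV]
  have hUU' : ∀ a b : Fin 2,
      (Polynomial.X - inV (Polynomial.X : A[X]) + algebraMap R (Polynomial (A[X])) η)
          * (inU (shiftDown c' (U a)) * inV (shiftDown c' (U b)))
      = (Polynomial.X - inV (Polynomial.X : A[X]))
          * (inV (shiftDown c' (U b)) * inU (shiftDown c' (U a)))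
        + algebraMap R (Polynomial (A[X])) η
          * (inV (shiftDown c' (U a)) * inU (shiftDown c' (U b))) := by
    intro a b
    have h0 := congrArg (phiHom c' hc) (hUU a b)
    simp only [map_mul, map_add, e1, e2, phi_inU, phi_inV] at h0
    exact h0
  have hTUc : ∀ a b : Fin 2, ∀ i j, Commute ((T a).coeff i) ((U b).coeff j) :=
    fun a b => (inU_mul_inV_comm_iff _ _).mp (hTU a b)
  have hTU'c : ∀ a b : Fin 2, ∀ i j,
      Commute ((T a).coeff i) ((shiftDown c' (U b)).coeff j) :=
    fun a b i => commute_shiftDown_coeff _ _ _ (hTUc a b i) (hc _)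
  have HTW : ∀ a b : Fin 2,
      inU (T a) * inV (shiftDown c' (U b)) = inV (shiftDown c' (U b)) * inU (T a) :=
    fun a b => (inU_mul_inV_comm_iff _ _).mpr (hTU'c a b)
  have HWT : ∀ a b : Fin 2,
      inU (shiftDown c' (U a)) * inV (T b) = inV (T b) * inU (shiftDown c' (U a)) :=
    fun a b => (inU_mul_inV_comm_iff _ _).mpr fun i j => (hTU'c b a j i).symm
  have gU : inU (T 1 * shiftDown c' (U 0) - T 0 * shiftDown c' (U 1))
      = inU (T 1) * inU (shiftDown c' (U 0)) - inU (T 0) * inU (shiftDown c' (U 1)) := by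
    simp only [inU, Polynomial.map_sub, Polynomial.map_mul]
  have gV : inV (T 1 * shiftDown c' (U 0) - T 0 * shiftDown c' (U 1))
      = inV (T 1) * inV (shiftDown c' (U 0)) - inV (T 0) * inV (shiftDown c' (U 1)) := by
    simp only [inV, map_sub, map_mul]
  rw [gU, gV]
  exact core_comm (fun a => inU (T a)) (fun a => inV (T a))
    (fun a => inU (shiftDown c' (U a))) (fun a => inV (shiftDown c' (U a)))
    hx hh hreg1 hreg2 hTT hUU' HTW HWT
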